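/- arXiv:2308.06178 — 2 statements merged into one kernel-verified Lean document; each statement's English description precedes it below -/
import Mathlib

section
/- Let R_1, …, R_k be nonempty finite subsets of a finite set Λ, (p_x)_{x∈Λ} probability weights on I, and (J_{xy}) a symmetric family of reals. Define ξ_t({x}) = Σ_{s_x∈I}(e^{its_x}−1)p_x(s_x) and, for |R| ≥ 2, ξ_t(R) = Σ_{s_R∈I^R} Σ_{g∈G_R} Σ_{S⊂R} Π_{{x,y}∈E_g}(e^{J_{xy}s_xs_y}−1) Π_{x∈S}(e^{its_x}−1) Π_{x∈R} p_x(s_x). Then the real part of the derivative at t = 0 of the product vanishes: Re( d/dt [Π_{i=1}^k ξ_t(R_i)] |_{t=0} ) = 0. -/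
open Finset
open scoped Classical

namespace SpinLCLT

/-- The set of connected simple graphs on a finite vertex type `W`. -/
noncomputable def connGraphs (W : Type*) [Fintype W] : Finset (SimpleGraph W) :=
  Finset.univ.filter (fun g => g.Connected)

/-- The product over the edges `{x,y}` of a graph `g` of the Mayer factors
`e^{J_{xy} f(x) f(y)} − 1`. -/
noncomputable def edgeProd {W : Type*} [Fintype W] [DecidableEq W]
    (J : W → W → ℝ) (hJ : ∀ x y, J x y = J y x) (f : W → ℝ)
    (g : SimpleGraph W) : ℂ :=
  ∏ e ∈ g.edgeFinset,
    Sym2.lift ⟨fun x y => Complex.exp ((J x y * f x * f y : ℝ) : ℂ) - 1,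
      fun x y => by dsimp only; rw [hJ x y, mul_right_comm]⟩ e

/-- The polymer activity `ξ_t(R)`:
`ξ_t({x}) = Σ_{s∈I}(e^{its}−1)p_x(s)` and, for `|R| ≥ 2`,
`ξ_t(R) = Σ_{s_R∈I^R} Σ_{g∈G_R} Σ_{S⊆R} Π_{{x,y}∈E_g}(e^{J_{xy}s_xs_y}−1)
Π_{x∈S}(e^{its_x}−1) Π_{x∈R} p_x(s_x)`, where `I = Finset.Icc a b`. -/
noncomputable def xi (a b : ℤ) {V : Type*} [DecidableEq V] (p : V → ℤ → ℝ)
    (J : V → V → ℝ) (hJ : ∀ x y, J x y = J y x) (R : Finset V) (t : ℝ) : ℂ :=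
  if R.card = 1 then
    ∑ x ∈ R, ∑ z ∈ Finset.Icc a b,
      (Complex.exp (Complex.I * t * z) - 1) * (p x z : ℂ)
  else
    ∑ s ∈ Fintype.piFinset (fun _ : ↥R => Finset.Icc a b),
      ∑ g ∈ connGraphs ↥R,
        ∑ S ∈ (Finset.univ : Finset ↥R).powerset,
          (edgeProd (fun x y : ↥R => J ↑x ↑y) (fun x y => hJ ↑x ↑y)
              (fun x : ↥R => (s x : ℝ)) g) *
            (∏ x ∈ S, (Complex.exp (Complex.I * t * (s x : ℤ)) - 1)) *
            (∏ x : ↥R, (p ↑x (s x) : ℂ))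

/-- The weight `w₀(R)`: `w₀({x}) = δσ` and, for `|R| ≥ 2`,
`w₀(R) = (1+δσ)^{|R|} Σ_{s_R∈I^R} Π_{x∈R} p_x(s_x) ·
|Σ_{g∈G_R} Π_{{x,y}∈E_g}(e^{J_{xy}s_xs_y}−1)|`. -/
noncomputable def w0 (a b : ℤ) {V : Type*} [DecidableEq V] (δ σ : ℝ)
    (p : V → ℤ → ℝ) (J : V → V → ℝ) (hJ : ∀ x y, J x y = J y x)
    (R : Finset V) : ℝ :=
  if R.card = 1 then δ * σ
  else (1 + δ * σ) ^ R.card *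
    ∑ s ∈ Fintype.piFinset (fun _ : ↥R => Finset.Icc a b),
      (∏ x : ↥R, p ↑x (s x)) *
        ‖(∑ g ∈ connGraphs ↥R,
          edgeProd (fun x y : ↥R => J ↑x ↑y) (fun x y => hJ ↑x ↑y)
            (fun x : ↥R => (s x : ℝ)) g)‖


lemma conj_edgeProd {W : Type*} [Fintype W] [DecidableEq W]
    (J : W → W → ℝ) (hJ : ∀ x y, J x y = J y x) (f : W → ℝ) (g : SimpleGraph W) :
    (starRingEnd ℂ) (edgeProd J hJ f g) = edgeProd J hJ f g := by
  unfold edgeProd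
  rw [map_prod]
  refine Finset.prod_congr rfl fun e _ => ?_
  induction e using Sym2.ind with
  | _ x y =>
    simp only [Sym2.lift_mk, map_sub, map_one, ← Complex.exp_conj, Complex.conj_ofReal]

lemma conj_arg (t : ℝ) (z : ℤ) :
    (starRingEnd ℂ) (Complex.I * (t : ℂ) * (z : ℂ)) = Complex.I * ((-t : ℝ) : ℂ) * (z : ℂ) := by
  simp only [map_mul, Complex.conj_I, Complex.conj_ofReal, map_intCast, Complex.ofReal_neg]
  ring

lemma conj_xi (a b : ℤ) {V : Type*} [DecidableEq V] (p : V → ℤ → ℝ)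
    (J : V → V → ℝ) (hJ : ∀ x y, J x y = J y x) (R : Finset V) (t : ℝ) :
    (starRingEnd ℂ) (xi a b p J hJ R t) = xi a b p J hJ R (-t) := by
  unfold xi
  split_ifs with h
  · rw [map_sum]; refine Finset.sum_congr rfl fun x _ => ?_
    rw [map_sum]; refine Finset.sum_congr rfl fun z _ => ?_
    rw [map_mul, Complex.conj_ofReal, map_sub, map_one, ← Complex.exp_conj, conj_arg]
  · rw [map_sum]; refine Finset.sum_congr rfl fun s _ => ?_
    rw [map_sum]; refine Finset.sum_congr rfl fun g _ => ?_
    rw [map_sum]; refine Finset.sum_congr rfl fun S _ => ?_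
    rw [map_mul, map_mul, conj_edgeProd, map_prod, map_prod]
    congr 1
    · congr 1
      refine Finset.prod_congr rfl fun x _ => ?_
      rw [map_sub, map_one, ← Complex.exp_conj, conj_arg]
    · exact Finset.prod_congr rfl fun x _ => Complex.conj_ofReal _

lemma diff_xi (a b : ℤ) {V : Type*} [DecidableEq V] (p : V → ℤ → ℝ)
    (J : V → V → ℝ) (hJ : ∀ x y, J x y = J y x) (R : Finset V) :
    Differentiable ℝ (fun t : ℝ => xi a b p J hJ R t) := by
  unfold xi
  split_ifs with h
  · apply Differentiable.fun_sum; intro x _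
    apply Differentiable.fun_sum; intro z _
    apply Differentiable.mul_const
    apply Differentiable.sub_const
    apply Complex.differentiable_exp.comp
    apply Differentiable.mul_const
    exact (Complex.ofRealCLM.differentiable.const_mul _)
  · apply Differentiable.fun_sum; intro s _
    apply Differentiable.fun_sum; intro g _
    apply Differentiable.fun_sum; intro S _
    apply Differentiable.mul_const
    apply Differentiable.const_mul
    apply Differentiable.fun_finset_prod; intro x _
    apply Differentiable.sub_const
    apply Complex.differentiable_exp.comp
    apply Differentiable.mul_const
    exact (Complex.ofRealCLM.differentiable.const_mul _)

/-- For nonempty subsets `R_1,…,R_k` of a finite set `Λ`,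
probability weights `(p_x)` and symmetric `(J_{xy})`, the real part of the
derivative at `t = 0` of `Π_{i=1}^k ξ_t(R_i)` vanishes. -/
theorem re_deriv_prod_xi_at_zero
    (a b : ℤ) (hab : a < b) {V : Type*} [DecidableEq V]
    (Λ : Finset V)
    (p : V → ℤ → ℝ)
    (hp0 : ∀ x, ∀ z ∈ Finset.Icc a b, 0 ≤ p x z)
    (hp1 : ∀ x, ∑ z ∈ Finset.Icc a b, p x z = 1)
    (J : V → V → ℝ) (hJ : ∀ x y, J x y = J y x)
    (k : ℕ) (R : Fin k → Finset V)
    (hRne : ∀ i, (R i).Nonempty) (hRsub : ∀ i, R i ⊆ Λ) :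
    (deriv (fun t : ℝ => ∏ i : Fin k, xi a b p J hJ (R i) t) 0).re = 0 := by
  set f : ℝ → ℂ := fun t => ∏ i : Fin k, xi a b p J hJ (R i) t with hf
  have hdiff : Differentiable ℝ f := by
    apply Differentiable.fun_finset_prod
    intro i _
    exact diff_xi a b p J hJ (R i)
  have hd : HasDerivAt f (deriv f 0) 0 := (hdiff 0).hasDerivAt
  have hsym : (fun t : ℝ => f (-t)) = fun t : ℝ => (starRingEnd ℂ) (f t) := by
    funext t
    simp only [hf, map_prod]
    exact Finset.prod_congr rfl fun i _ => (conj_xi a b p J hJ (R i) t).symm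
  have h1 : HasDerivAt (fun t : ℝ => f (-t)) (-(deriv f 0)) 0 := by
    have hd' : HasDerivAt f (deriv f 0) (-(0:ℝ)) := by simpa using hd
    have := hd'.scomp (0 : ℝ) (hasDerivAt_neg (0 : ℝ))
    simp [Function.comp] at this
    exact this
  have h2 : HasDerivAt (fun t : ℝ => (starRingEnd ℂ) (f t))
      ((starRingEnd ℂ) (deriv f 0)) 0 := by
    have := Complex.conjCLE.hasFDerivAt.comp_hasDerivAt (0 : ℝ) hd
    simp at this
    exact this
  rw [hsym] at h1
  have h3 : -(deriv f 0) = (starRingEnd ℂ) (deriv f 0) := h1.unique h2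
  have h4 := congrArg Complex.re h3
  simp only [Complex.neg_re, Complex.conj_re] at h4
  linarith


end SpinLCLT
end

section
/- Let Λ̃ be a finite set, (p_x)_{x∈Λ̃} probability weights on I, (J_{xy}) a symmetric family of reals, t ∈ ℝ, and c > 0. Suppose |Σ_{s∈I} e^{its} p_x(s)| ≤ e^{−c} for every x ∈ Λ̃. Then |Ξ(t)| ≤ e^{−c|Λ̃|} · Σ_{g∈𝒢_{Λ̃}} e^{c|S_g|} | Σ_{s_{S_g}∈I^{S_g}} Π_{x∈S_g} e^{its_x} p_x(s_x) Π_{{x,y}∈E_g}(e^{J_{xy}s_xs_y}−1) |, where Ξ(t) = Σ_{s∈I^{Λ̃}} Π_{{x,y}⊂Λ̃} e^{J_{xy}s_xs_y} Π_{x∈Λ̃} e^{its_x} p_x(s_x). -/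
open Finset
open scoped Classical

namespace SpinLCLT

/-- The set of non-isolated vertices `S_g = ∪_{{x,y}∈E_g} {x,y}` of a graph `g`. -/
noncomputable def nonIsolated {W : Type*} [Fintype W] (g : SimpleGraph W) :
    Finset W :=
  Finset.univ.filter (fun x => ∃ y, g.Adj x y)

theorem offDiag_eq_two_mul_edge {W : Type*} [Fintype W] [DecidableEq W] (F : W → W → ℝ)
    (hF : ∀ x y, F x y = F y x) :
    ∑ q ∈ (Finset.univ : Finset W).offDiag, F q.1 q.2 =
      2 * ∑ e ∈ (⊤ : SimpleGraph W).edgeFinset,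
        Sym2.lift ⟨F, fun x y => hF x y⟩ e := by
  rw [← Finset.sum_fiberwise_of_maps_to (g := fun q : W × W => Sym2.mk q.1 q.2)
      (t := (⊤ : SimpleGraph W).edgeFinset)
      (fun q hq => by
        simp only [Finset.mem_offDiag] at hq
        simp [SimpleGraph.mem_edgeFinset, hq.2.2])]
  rw [Finset.mul_sum]
  apply Finset.sum_congr rfl
  intro e he
  induction e using Sym2.ind with
  | _ x y =>
    have hxy : x ≠ y := by
      simpa [SimpleGraph.mem_edgeFinset] using he
    have hfib : (Finset.univ : Finset W).offDiag.filter
        (fun q => Sym2.mk q.1 q.2 = s(x, y)) = {(x, y), (y, x)} := by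
      ext ⟨u, v⟩
      simp only [Finset.mem_filter, Finset.mem_offDiag, Finset.mem_univ, true_and,
        Finset.mem_insert, Finset.mem_singleton, Prod.mk.injEq, Sym2.eq, Sym2.rel_iff',
        Prod.mk.injEq, Prod.swap_prod_mk]
      constructor
      · rintro ⟨hne, h | h⟩
        · exact Or.inl h
        · exact Or.inr ⟨h.1, h.2⟩
      · rintro (⟨rfl, rfl⟩ | ⟨rfl, rfl⟩)
        · exact ⟨hxy, Or.inl ⟨rfl, rfl⟩⟩
        · exact ⟨hxy.symm, Or.inr ⟨rfl, rfl⟩⟩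
    rw [hfib, Finset.sum_pair (by simp [hxy, Ne.symm])]
    simp only [Sym2.lift_mk]
    rw [hF y x]
    ring

theorem exp_expand {W : Type*} [Fintype W] [DecidableEq W] (J : W → W → ℝ)
    (hJ : ∀ x y, J x y = J y x) (f : W → ℝ) :
    Complex.exp ((((1 : ℝ)/2) *
        ∑ q ∈ (Finset.univ : Finset W).offDiag, J q.1 q.2 * f q.1 * f q.2 : ℝ) : ℂ)
      = ∑ g : SimpleGraph W, edgeProd J hJ f g := by
  have hF : ∀ x y, J x y * f x * f y = J y x * f y * f x := by
    intro x y; rw [hJ]; ring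
  rw [offDiag_eq_two_mul_edge (fun x y => J x y * f x * f y) hF]
  have h12 : ((1:ℝ)/2) * (2 * ∑ e ∈ (⊤ : SimpleGraph W).edgeFinset,
      Sym2.lift ⟨fun x y => J x y * f x * f y, fun x y => hF x y⟩ e)
      = ∑ e ∈ (⊤ : SimpleGraph W).edgeFinset,
      Sym2.lift ⟨fun x y => J x y * f x * f y, fun x y => hF x y⟩ e := by ring
  rw [h12, Complex.ofReal_sum, Complex.exp_sum]
  have hterm : ∀ e ∈ (⊤ : SimpleGraph W).edgeFinset,
      Complex.exp ((Sym2.lift ⟨fun x y => J x y * f x * f y, fun x y => hF x y⟩ e : ℝ) : ℂ)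
        = (Sym2.lift ⟨fun x y => Complex.exp ((J x y * f x * f y : ℝ) : ℂ) - 1,
            fun x y => by dsimp only; rw [hJ x y, mul_right_comm]⟩ e) + 1 := by
    intro e _
    induction e using Sym2.ind with
    | _ x y => simp only [Sym2.lift_mk]; ring
  rw [Finset.prod_congr rfl hterm, Finset.prod_add]
  simp only [Finset.prod_const_one, mul_one]
  -- bijection: subsets of edges of ⊤ ↔ simple graphs
  have hset : ∀ t ∈ (⊤ : SimpleGraph W).edgeFinset.powerset,
      ∀ (h : Fintype (SimpleGraph.fromEdgeSet (↑t : Set (Sym2 W))).edgeSet),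
      @SimpleGraph.edgeFinset W (SimpleGraph.fromEdgeSet (↑t : Set (Sym2 W))) h = t := by
    intro t ht _
    simp only [Finset.mem_powerset] at ht
    have hnd : ∀ e ∈ t, ¬ e.IsDiag := by
      intro e he
      have := ht he
      induction e using Sym2.ind with
      | _ x y =>
        simp only [SimpleGraph.mem_edgeFinset, SimpleGraph.edgeSet_top,
          Set.mem_setOf_eq] at this
        exact this
    ext e
    simp only [SimpleGraph.mem_edgeFinset, SimpleGraph.edgeSet_fromEdgeSet,
      Set.mem_diff, Finset.mem_coe, Set.mem_setOf_eq]
    constructor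
    · rintro ⟨he, _⟩; exact he
    · intro he; exact ⟨he, hnd e he⟩
  refine Finset.sum_nbij' (fun t : Finset (Sym2 W) => SimpleGraph.fromEdgeSet ↑t)
    (fun g : SimpleGraph W => g.edgeFinset) ?_ ?_ (fun t ht => hset t ht _) ?_ ?_
  · intro t _; exact Finset.mem_univ _
  · intro g _
    simp only [Finset.mem_powerset]
    exact SimpleGraph.edgeFinset_mono le_top
  · intro g _
    simp only [SimpleGraph.coe_edgeFinset, SimpleGraph.fromEdgeSet_edgeSet]
  · intro t ht
    rw [edgeProd]
    exact (Finset.prod_congr (hset t ht _) (fun _ _ => rfl)).symm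

theorem mem_nonIsolated {W : Type*} [Fintype W] {g : SimpleGraph W} {x y : W}
    (h : g.Adj x y) : x ∈ nonIsolated g ∧ y ∈ nonIsolated g := by
  constructor <;> simp only [nonIsolated, Finset.mem_filter, Finset.mem_univ, true_and]
  · exact ⟨y, h⟩
  · exact ⟨x, h.symm⟩

theorem edgeProd_congr {W : Type*} [Fintype W] [DecidableEq W]
    (J : W → W → ℝ) (hJ : ∀ x y, J x y = J y x) (g : SimpleGraph W)
    {f₁ f₂ : W → ℝ} (h : ∀ x ∈ nonIsolated g, f₁ x = f₂ x) :
    edgeProd J hJ f₁ g = edgeProd J hJ f₂ g := by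
  unfold edgeProd
  apply Finset.prod_congr rfl
  intro e he
  induction e using Sym2.ind with
  | _ x y =>
    rw [SimpleGraph.mem_edgeFinset, SimpleGraph.mem_edgeSet] at he
    simp only [Sym2.lift_mk]
    rw [h x (mem_nonIsolated he).1, h y (mem_nonIsolated he).2]

/-- Splitting a sum over all spin configurations into the configurations on `S`
and the (factorizing) configurations on `Sᶜ`. -/

theorem sum_piFinset_split {W : Type*} [Fintype W] [DecidableEq W]
    (I : Finset ℤ) (S : Finset W) (A : (W → ℤ) → ℂ) (k : W → ℤ → ℂ)
    (hA : ∀ s s' : W → ℤ, (∀ x ∈ S, s x = s' x) → A s = A s') :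
    ∑ s ∈ Fintype.piFinset (fun _ : W => I), A s * ∏ x ∈ Sᶜ, k x (s x)
      = (∑ f ∈ S.pi (fun _ => I),
          A (fun x => if hx : x ∈ S then f x hx else 0)) *
        ∏ x ∈ Sᶜ, ∑ z ∈ I, k x z := by
  have step1 : ∑ s ∈ Fintype.piFinset (fun _ : W => I), A s * ∏ x ∈ Sᶜ, k x (s x)
      = ∑ q ∈ (S.pi (fun _ => I)) ×ˢ (Sᶜ.pi (fun _ => I)),
          A (fun x => if hx : x ∈ S then q.1 x hx else 0) *
            ∏ x ∈ Sᶜ.attach, k x.1 (q.2 x.1 x.2) := by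
    refine Finset.sum_nbij'
      (fun s => (fun x _ => s x, fun x _ => s x))
      (fun q x => if hx : x ∈ S then q.1 x hx else
        if hx' : x ∈ Sᶜ then q.2 x hx' else 0) ?_ ?_ ?_ ?_ ?_
    · intro s hs
      simp only [Fintype.mem_piFinset] at hs
      simp only [Finset.mem_product, Finset.mem_pi]
      exact ⟨fun x _ => hs x, fun x _ => hs x⟩
    · intro q hq
      simp only [Finset.mem_product, Finset.mem_pi] at hq
      simp only [Fintype.mem_piFinset]
      intro x
      by_cases hx : x ∈ S
      · simp only [dif_pos hx]; exact hq.1 x hx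
      · have hx' : x ∈ Sᶜ := Finset.mem_compl.mpr hx
        simp only [dif_neg hx, dif_pos hx']; exact hq.2 x hx'
    · intro s _
      funext x
      by_cases hx : x ∈ S
      · simp [dif_pos hx]
      · have hx' : x ∈ Sᶜ := Finset.mem_compl.mpr hx
        simp only [dif_neg hx, dif_pos hx']
    · intro q _
      ext x hx
      · simp [dif_pos hx]
      · have hx2 : x ∉ S := Finset.mem_compl.mp hx
        simp [dif_neg hx2, dif_pos hx]
    · intro s hs
      congr 1
      · apply hA
        intro x hx
        simp [dif_pos hx]
      · rw [← Finset.prod_attach Sᶜ (fun x => k x (s x))]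
  rw [step1, Finset.sum_product]
  rw [Finset.sum_mul]
  apply Finset.sum_congr rfl
  intro f _
  dsimp only
  rw [← Finset.mul_sum]
  congr 1
  rw [Finset.prod_sum]


/-- If `|Σ_{s∈I} e^{its} p_x(s)| ≤ e^{−c}` for every `x ∈ Λ̃`,
then
`|Ξ(t)| ≤ e^{−c|Λ̃|} Σ_{g∈𝒢_Λ̃} e^{c|S_g|} |Σ_{s_{S_g}∈I^{S_g}}
Π_{x∈S_g} e^{its_x}p_x(s_x) Π_{{x,y}∈E_g}(e^{J_{xy}s_xs_y}−1)|`,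
where `Ξ(t) = Σ_{s∈I^Λ̃} Π_{{x,y}⊂Λ̃} e^{J_{xy}s_xs_y} Π_{x∈Λ̃} e^{its_x} p_x(s_x)`
(the product over unordered pairs being written as the exponential of half the
sum over ordered pairs of distinct points, as `J` is symmetric). -/
theorem abs_Xi_le_decoupled_bound
    (a b : ℤ) (hab : a < b) {V : Type*} [DecidableEq V]
    (Λ : Finset V)
    (p : V → ℤ → ℝ)
    (hp0 : ∀ x, ∀ z ∈ Finset.Icc a b, 0 ≤ p x z)
    (hp1 : ∀ x, ∑ z ∈ Finset.Icc a b, p x z = 1)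
    (J : V → V → ℝ) (hJ : ∀ x y, J x y = J y x)
    (t : ℝ) (c : ℝ) (hc : 0 < c)
    (hsmall : ∀ x : ↥Λ,
      ‖(∑ z ∈ Finset.Icc a b,
          Complex.exp (Complex.I * t * z) * (p ↑x z : ℂ))‖ ≤ Real.exp (-c)) :
    ‖
        (∑ s ∈ Fintype.piFinset (fun _ : ↥Λ => Finset.Icc a b),
          Complex.exp (((1 / 2 : ℝ) *
              ∑ q ∈ (Finset.univ : Finset ↥Λ).offDiag,
                J ↑q.1 ↑q.2 * (s q.1 : ℝ) * (s q.2 : ℝ) : ℝ)) *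
            ∏ x : ↥Λ, (Complex.exp (Complex.I * t * (s x : ℤ)) * (p ↑x (s x) : ℂ)))‖ ≤
      Real.exp (-(c * (Λ.card : ℝ))) *
        ∑ g : SimpleGraph ↥Λ,
          Real.exp (c * ((nonIsolated g).card : ℝ)) *
            ‖
              (∑ f ∈ (nonIsolated g).pi (fun _ => Finset.Icc a b),
                (∏ x ∈ (nonIsolated g).attach,
                    Complex.exp (Complex.I * t * (f x.1 x.2 : ℤ)) *
                      (p ↑(x.1) (f x.1 x.2) : ℂ)) *
                  edgeProd (fun x y : ↥Λ => J ↑x ↑y) (fun x y => hJ ↑x ↑y)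
                    (fun x : ↥Λ =>
                      if hx : x ∈ nonIsolated g then ((f x hx : ℤ) : ℝ) else 0) g)‖ := by
  classical
  -- Step 1: expand the exponential into a sum over graphs and swap sums
  have h1 : (∑ s ∈ Fintype.piFinset (fun _ : ↥Λ => Finset.Icc a b),
        Complex.exp (((1 / 2 : ℝ) *
            ∑ q ∈ (Finset.univ : Finset ↥Λ).offDiag,
              J ↑q.1 ↑q.2 * (s q.1 : ℝ) * (s q.2 : ℝ) : ℝ)) *
          ∏ x : ↥Λ, (Complex.exp (Complex.I * t * (s x : ℤ)) * (p ↑x (s x) : ℂ)))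
      = ∑ g : SimpleGraph ↥Λ, ∑ s ∈ Fintype.piFinset (fun _ : ↥Λ => Finset.Icc a b),
          edgeProd (fun x y : ↥Λ => J ↑x ↑y) (fun x y => hJ ↑x ↑y)
              (fun x : ↥Λ => ((s x : ℤ) : ℝ)) g *
            ∏ x : ↥Λ, (Complex.exp (Complex.I * t * (s x : ℤ)) * (p ↑x (s x) : ℂ)) := by
    rw [Finset.sum_comm]
    apply Finset.sum_congr rfl
    intro s _
    rw [exp_expand (fun x y : ↥Λ => J ↑x ↑y) (fun x y => hJ ↑x ↑y)
      (fun x : ↥Λ => ((s x : ℤ) : ℝ)), Finset.sum_mul]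
  -- Step 2: for each graph, factor the isolated sites out
  have h2 : ∀ g : SimpleGraph ↥Λ,
      (∑ s ∈ Fintype.piFinset (fun _ : ↥Λ => Finset.Icc a b),
        edgeProd (fun x y : ↥Λ => J ↑x ↑y) (fun x y => hJ ↑x ↑y)
            (fun x : ↥Λ => ((s x : ℤ) : ℝ)) g *
          ∏ x : ↥Λ, (Complex.exp (Complex.I * t * (s x : ℤ)) * (p ↑x (s x) : ℂ)))
      = (∑ f ∈ (nonIsolated g).pi (fun _ => Finset.Icc a b),
          (∏ x ∈ (nonIsolated g).attach,
              Complex.exp (Complex.I * t * (f x.1 x.2 : ℤ)) *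
                (p ↑(x.1) (f x.1 x.2) : ℂ)) *
            edgeProd (fun x y : ↥Λ => J ↑x ↑y) (fun x y => hJ ↑x ↑y)
              (fun x : ↥Λ =>
                if hx : x ∈ nonIsolated g then ((f x hx : ℤ) : ℝ) else 0) g) *
        ∏ x ∈ (nonIsolated g)ᶜ, ∑ z ∈ Finset.Icc a b,
          Complex.exp (Complex.I * t * (z : ℤ)) * (p ↑x z : ℂ) := by
    intro g
    have hA : ∀ s s' : ↥Λ → ℤ, (∀ x ∈ nonIsolated g, s x = s' x) →
        ((∏ x ∈ nonIsolated g,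
            Complex.exp (Complex.I * t * (s x : ℤ)) * (p ↑x (s x) : ℂ)) *
          edgeProd (fun x y : ↥Λ => J ↑x ↑y) (fun x y => hJ ↑x ↑y)
            (fun x : ↥Λ => ((s x : ℤ) : ℝ)) g)
        = ((∏ x ∈ nonIsolated g,
            Complex.exp (Complex.I * t * (s' x : ℤ)) * (p ↑x (s' x) : ℂ)) *
          edgeProd (fun x y : ↥Λ => J ↑x ↑y) (fun x y => hJ ↑x ↑y)
            (fun x : ↥Λ => ((s' x : ℤ) : ℝ)) g) := by
      intro s s' h
      congr 1
      · exact Finset.prod_congr rfl (fun x hx => by rw [h x hx])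
      · exact edgeProd_congr _ _ g (fun x hx => by rw [h x hx])
    have key := sum_piFinset_split (Finset.Icc a b) (nonIsolated g)
      (fun s : ↥Λ → ℤ =>
        (∏ x ∈ nonIsolated g,
            Complex.exp (Complex.I * t * (s x : ℤ)) * (p ↑x (s x) : ℂ)) *
          edgeProd (fun x y : ↥Λ => J ↑x ↑y) (fun x y => hJ ↑x ↑y)
            (fun x : ↥Λ => ((s x : ℤ) : ℝ)) g)
      (fun x z => Complex.exp (Complex.I * t * (z : ℤ)) * (p ↑x z : ℂ)) hA
    have lhs_eq : (∑ s ∈ Fintype.piFinset (fun _ : ↥Λ => Finset.Icc a b),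
        edgeProd (fun x y : ↥Λ => J ↑x ↑y) (fun x y => hJ ↑x ↑y)
            (fun x : ↥Λ => ((s x : ℤ) : ℝ)) g *
          ∏ x : ↥Λ, (Complex.exp (Complex.I * t * (s x : ℤ)) * (p ↑x (s x) : ℂ)))
        = ∑ s ∈ Fintype.piFinset (fun _ : ↥Λ => Finset.Icc a b),
          ((∏ x ∈ nonIsolated g,
              Complex.exp (Complex.I * t * (s x : ℤ)) * (p ↑x (s x) : ℂ)) *
            edgeProd (fun x y : ↥Λ => J ↑x ↑y) (fun x y => hJ ↑x ↑y)
              (fun x : ↥Λ => ((s x : ℤ) : ℝ)) g) *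
          ∏ x ∈ (nonIsolated g)ᶜ,
            Complex.exp (Complex.I * t * (s x : ℤ)) * (p ↑x (s x) : ℂ) := by
      apply Finset.sum_congr rfl
      intro s _
      rw [← Finset.prod_mul_prod_compl (nonIsolated g)
        (fun x => Complex.exp (Complex.I * t * (s x : ℤ)) * (p ↑x (s x) : ℂ))]
      ring
    rw [lhs_eq, key]
    congr 1
    apply Finset.sum_congr rfl
    intro f _
    dsimp only
    refine congrArg₂ (· * ·) ?_ ?_
    · rw [← Finset.prod_attach (nonIsolated g)
        (fun x => Complex.exp (Complex.I * t *
          ((if hx : x ∈ nonIsolated g then f x hx else 0 : ℤ) : ℂ)) *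
          (p ↑x (if hx : x ∈ nonIsolated g then f x hx else 0) : ℂ))]
      apply Finset.prod_congr rfl
      intro x _
      rw [dif_pos x.2]
    · apply edgeProd_congr
      intro x hx
      rw [dif_pos hx, dif_pos hx]
  -- Step 3: bound the isolated-site factors
  have habs : ∀ g : SimpleGraph ↥Λ,
      ‖(∏ x ∈ (nonIsolated g)ᶜ, ∑ z ∈ Finset.Icc a b,
          Complex.exp (Complex.I * t * (z : ℤ)) * (p ↑x z : ℂ))‖
        ≤ Real.exp (-(c * (Λ.card : ℝ))) * Real.exp (c * ((nonIsolated g).card : ℝ)) := by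
    intro g
    rw [norm_prod]
    have hle : ∀ x ∈ (nonIsolated g)ᶜ,
        ‖(∑ z ∈ Finset.Icc a b,
          Complex.exp (Complex.I * t * (z : ℤ)) * (p ↑x z : ℂ))‖ ≤ Real.exp (-c) :=
      fun x _ => hsmall x
    calc ∏ x ∈ (nonIsolated g)ᶜ, ‖(∑ z ∈ Finset.Icc a b,
          Complex.exp (Complex.I * t * (z : ℤ)) * (p ↑x z : ℂ))‖
        ≤ ∏ _x ∈ (nonIsolated g)ᶜ, Real.exp (-c) :=
          Finset.prod_le_prod (fun x _ => norm_nonneg _) hle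
      _ = Real.exp (-c) ^ ((nonIsolated g)ᶜ.card) := by rw [Finset.prod_const]
      _ = Real.exp (-(c * (Λ.card : ℝ))) * Real.exp (c * ((nonIsolated g).card : ℝ)) := by
          rw [← Real.exp_nat_mul, ← Real.exp_add]
          congr 1
          have hcard : ((nonIsolated g)ᶜ.card : ℝ)
              = (Λ.card : ℝ) - ((nonIsolated g).card : ℝ) := by
            rw [Finset.card_compl]
            rw [Nat.cast_sub (Finset.card_le_univ _)]
            rw [Fintype.card_coe]
          rw [hcard]
          ring
  calc ‖(∑ s ∈ Fintype.piFinset (fun _ : ↥Λ => Finset.Icc a b),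
        Complex.exp (((1 / 2 : ℝ) *
            ∑ q ∈ (Finset.univ : Finset ↥Λ).offDiag,
              J ↑q.1 ↑q.2 * (s q.1 : ℝ) * (s q.2 : ℝ) : ℝ)) *
          ∏ x : ↥Λ, (Complex.exp (Complex.I * t * (s x : ℤ)) * (p ↑x (s x) : ℂ)))‖
      ≤ ∑ g : SimpleGraph ↥Λ, ‖
          (∑ s ∈ Fintype.piFinset (fun _ : ↥Λ => Finset.Icc a b),
            edgeProd (fun x y : ↥Λ => J ↑x ↑y) (fun x y => hJ ↑x ↑y)
                (fun x : ↥Λ => ((s x : ℤ) : ℝ)) g *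
              ∏ x : ↥Λ, (Complex.exp (Complex.I * t * (s x : ℤ)) * (p ↑x (s x) : ℂ)))‖ := by
        rw [congrArg norm h1]
        exact norm_sum_le _ _
    _ ≤ ∑ g : SimpleGraph ↥Λ,
          ‖(∑ f ∈ (nonIsolated g).pi (fun _ => Finset.Icc a b),
            (∏ x ∈ (nonIsolated g).attach,
                Complex.exp (Complex.I * t * (f x.1 x.2 : ℤ)) *
                  (p ↑(x.1) (f x.1 x.2) : ℂ)) *
              edgeProd (fun x y : ↥Λ => J ↑x ↑y) (fun x y => hJ ↑x ↑y)
                (fun x : ↥Λ =>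
                  if hx : x ∈ nonIsolated g then ((f x hx : ℤ) : ℝ) else 0) g)‖ *
          (Real.exp (-(c * (Λ.card : ℝ))) * Real.exp (c * ((nonIsolated g).card : ℝ))) := by
        apply Finset.sum_le_sum
        intro g _
        rw [h2 g, norm_mul]
        exact mul_le_mul_of_nonneg_left (habs g) (norm_nonneg _)
    _ = Real.exp (-(c * (Λ.card : ℝ))) *
        ∑ g : SimpleGraph ↥Λ,
          Real.exp (c * ((nonIsolated g).card : ℝ)) *
            ‖
              (∑ f ∈ (nonIsolated g).pi (fun _ => Finset.Icc a b),
                (∏ x ∈ (nonIsolated g).attach,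
                    Complex.exp (Complex.I * t * (f x.1 x.2 : ℤ)) *
                      (p ↑(x.1) (f x.1 x.2) : ℂ)) *
                  edgeProd (fun x y : ↥Λ => J ↑x ↑y) (fun x y => hJ ↑x ↑y)
                    (fun x : ↥Λ =>
                      if hx : x ∈ nonIsolated g then ((f x hx : ℤ) : ℝ) else 0) g)‖ := by
        rw [Finset.mul_sum]
        apply Finset.sum_congr rfl
        intro g _
        ring


end SpinLCLT
end
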